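/- Let G = (V, E) be a finite undirected graph and let r₁, …, r_k be a sequence of contraction maps (each r_i maps every vertex of the current graph G_{i-1} into its own closed neighbourhood in G_{i-1}, and G_i is the resulting contracted graph). If the final graph G_k has no edges, then for all u, v ∈ V: u and v are in the same connected component of G if and only if (r_k ∘ r_{k-1} ∘ ⋯ ∘ r_1)(u) = (r_k ∘ ⋯ ∘ r_1)(v). -/

import Mathlib

/-- The contracted graph: edges join distinct representatives of adjacent vertices. -/
def contractedGraph {V : Type*} (G : SimpleGraph V) (r : V → V) : SimpleGraph V where
  Adj a b := a ≠ b ∧ ∃ v w : V, G.Adj v w ∧ r v = a ∧ r w = b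
  symm := by
    constructor
    rintro a b ⟨hab, v, w, hvw, hv, hw⟩
    exact ⟨hab.symm, w, v, hvw.symm, hw, hv⟩
  loopless := by constructor; rintro a ⟨h, -⟩; exact h rfl

/-- `iterGraph G r i` is the graph obtained from `G` after `i` contraction steps with
representative maps `r 0, r 1, …`. -/
def iterGraph {V : Type*} (G : SimpleGraph V) (r : ℕ → V → V) : ℕ → SimpleGraph V
  | 0 => G
  | i + 1 => contractedGraph (iterGraph G r i) (r i)

/-- `compMap r i` is the composition `r (i-1) ∘ ⋯ ∘ r 0`. -/
def compMap {V : Type*} (r : ℕ → V → V) : ℕ → V → V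
  | 0 => id
  | i + 1 => r i ∘ compMap r i

/-- Iterated contraction: if each `r i` maps every vertex into its closed neighbourhood
in the current graph `G_i`, and the final graph `G_k` has no edges, then two vertices
are in the same connected component of `G` iff their images under the composition
`r_{k-1} ∘ ⋯ ∘ r_0` coincide. -/
theorem stmt_9 {V : Type*} [Fintype V] (G : SimpleGraph V) (r : ℕ → V → V) (k : ℕ)
    (hr : ∀ i < k, ∀ v : V, r i v = v ∨ (iterGraph G r i).Adj v (r i v))
    (hfinal : ∀ a b : V, ¬ (iterGraph G r k).Adj a b) :
    ∀ u v : V, G.Reachable u v ↔ compMap r k u = compMap r k v := by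
  -- Forward: contraction preserves reachability.
  have fwd : ∀ i a b, (iterGraph G r i).Reachable a b →
      (iterGraph G r (i+1)).Reachable (r i a) (r i b) := by
    intro i a b h
    rw [SimpleGraph.reachable_iff_reflTransGen] at h
    induction h with
    | refl => exact SimpleGraph.Reachable.refl _
    | tail h' hadj ih =>
      rename_i c d
      by_cases hcd : r i c = r i d
      · rwa [hcd] at ih
      · exact ih.trans (SimpleGraph.Adj.reachable ⟨hcd, c, d, hadj, rfl, rfl⟩)
  -- Descend: reachability in `G_i` implies reachability in `G` (for `i ≤ k`).
  have descend : ∀ i, i ≤ k → ∀ a b, (iterGraph G r i).Reachable a b → G.Reachable a b := by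
    intro i
    induction i with
    | zero => intro _ a b h; exact h
    | succ i ih =>
      intro hik a b h
      have hi : i < k := lt_of_lt_of_le (Nat.lt_succ_self i) hik
      have hik' : i ≤ k := le_of_lt hi
      -- first descend one level
      have key : ∀ a b, (iterGraph G r (i+1)).Reachable a b → (iterGraph G r i).Reachable a b := by
        intro a b h
        rw [SimpleGraph.reachable_iff_reflTransGen] at h
        induction h with
        | refl => exact SimpleGraph.Reachable.refl _
        | tail h' hadj ih2 =>
          rename_i c d
          obtain ⟨hne, v, w, hvw, hv, hw⟩ := hadj
          have hcv : (iterGraph G r i).Reachable c v := by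
            rcases hr i hi v with heq | hadj'
            · rw [← hv, heq]
            · rw [← hv]; exact hadj'.symm.reachable
          have hwd : (iterGraph G r i).Reachable w d := by
            rcases hr i hi w with heq | hadj'
            · rw [← hw, heq]
            · rw [← hw]; exact hadj'.reachable
          exact ih2.trans (hcv.trans (hvw.reachable.trans hwd))
      exact ih hik' a b (key a b h)
  -- Every vertex reaches its iterated representative.
  have reach_comp : ∀ u : V, ∀ i ≤ k, G.Reachable u (compMap r i u) := by
    intro u i
    induction i with
    | zero => intro _; exact SimpleGraph.Reachable.refl _
    | succ i ih =>
      intro hik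
      have hi : i < k := lt_of_lt_of_le (Nat.lt_succ_self i) hik
      refine (ih (le_of_lt hi)).trans ?_
      rcases hr i hi (compMap r i u) with heq | hadj
      · show G.Reachable _ (r i (compMap r i u))
        rw [heq]
      · exact descend i (le_of_lt hi) _ _ hadj.reachable
  intro u v
  constructor
  · intro h
    have : ∀ i, (iterGraph G r i).Reachable (compMap r i u) (compMap r i v) := by
      intro i
      induction i with
      | zero => exact h
      | succ i ih => exact fwd i _ _ ih
    have eqk : ∀ a b : V, (iterGraph G r k).Reachable a b → a = b := by
      intro a b hab
      obtain ⟨p⟩ := hab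
      cases p with
      | nil => rfl
      | cons hadj _ => exact absurd hadj (hfinal _ _)
    exact eqk _ _ (this k)
  · intro h
    have h1 := reach_comp u k le_rfl
    have h2 := reach_comp v k le_rfl
    rw [h] at h1
    exact h1.trans h2.symm
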